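/- Let a, b > 0, k₁, k₂ ≥ 0 and c ∈ ℝ, and let f : ℝ⁴ → ℝ⁴ be the discrete Ziegler map. Then the set of fixed points of f, namely {p ∈ ℝ⁴ : f(p) = p}, is a finite set. -/

import Mathlib

/-- The discrete Ziegler map (with the non-Hamiltonian symmetry Δ = 0),
with real parameters `a b k₁ k₂ c`, acting on `(x, y, z, ω) ∈ ℝ⁴`. -/
noncomputable def zieglerMap (a b k₁ k₂ c : ℝ) : ℝ × ℝ × ℝ × ℝ → ℝ × ℝ × ℝ × ℝ :=
  fun p =>
    (p.2.1,
     (1 / (a * b)) * (-(a + b) * k₁ * p.1 + a * k₂ * p.2.2.1 + a * c * Real.sin p.1),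
     p.2.2.2,
     (1 / (a * b)) * (a * k₁ * p.1 - a * k₂ * p.2.2.1 - a * c * Real.sin p.1))

lemma aux_analyticAt_csin (z : ℂ) : AnalyticAt ℂ Complex.sin z := by
  have h : Complex.sin = fun z : ℂ =>
      (Complex.exp (-z * Complex.I) - Complex.exp (z * Complex.I)) * Complex.I / 2 := rfl
  rw [h]
  exact (((analyticAt_id.neg.mul analyticAt_const).cexp.sub
    ((analyticAt_id.mul analyticAt_const).cexp)).mul analyticAt_const).div
    analyticAt_const two_ne_zero

lemma aux_analyticAt_sin (x : ℝ) : AnalyticAt ℝ Real.sin x := by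
  have h : Real.sin = fun t : ℝ => Complex.reCLM (Complex.sin (Complex.ofRealCLM t)) := rfl
  rw [h]
  exact (Complex.reCLM.analyticAt _).comp
    (((aux_analyticAt_csin _).restrictScalars).comp (Complex.ofRealCLM.analyticAt x))

/-- The set of solutions of `x = μ * sin x` is finite. -/
lemma aux_sin_fixed_finite (μ : ℝ) : Set.Finite {x : ℝ | x = μ * Real.sin x} := by
  by_contra h
  have hinf : Set.Infinite {x : ℝ | x = μ * Real.sin x} := h
  have hsub : {x : ℝ | x = μ * Real.sin x} ⊆ Set.Icc (-|μ|) |μ| := by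
    intro x hx
    have hx' : |x| ≤ |μ| := by
      rw [hx, abs_mul]
      calc |μ| * |Real.sin x| ≤ |μ| * 1 :=
            mul_le_mul_of_nonneg_left
              (abs_le.mpr ⟨Real.neg_one_le_sin x, Real.sin_le_one x⟩) (abs_nonneg μ)
        _ = |μ| := mul_one _
    exact abs_le.mp hx'
  obtain ⟨x₀, -, hacc⟩ := hinf.exists_accPt_of_subset_isCompact isCompact_Icc hsub
  have hfreq : ∃ᶠ y in nhdsWithin x₀ {x₀}ᶜ, (fun t : ℝ => t) y = (fun t => μ * Real.sin t) y := by
    have := (accPt_iff_frequently).mp hacc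
    rw [frequently_nhdsWithin_iff]
    exact this.mono fun y hy => ⟨hy.2, hy.1⟩
  have hid : AnalyticOnNhd ℝ (fun t : ℝ => t) Set.univ := fun z _ => analyticAt_id
  have hsin : AnalyticOnNhd ℝ (fun t : ℝ => μ * Real.sin t) Set.univ := fun z _ =>
    (analyticAt_const).mul (aux_analyticAt_sin z)
  have heq := congrFun (hid.eq_of_frequently_eq hsin hfreq) Real.pi
  have hpi := Real.pi_pos
  rw [Real.sin_pi, mul_zero] at heq
  linarith

theorem fixed_points_finite
    (a b k₁ k₂ c : ℝ) (ha : 0 < a) (hb : 0 < b) (hk₁ : 0 ≤ k₁) (hk₂ : 0 ≤ k₂) :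
    Set.Finite {p : ℝ × ℝ × ℝ × ℝ | zieglerMap a b k₁ k₂ c p = p} := by
  set K : ℝ := a * b + (a + b) * k₁ + k₂ * (k₁ + a) with hK
  have hKpos : 0 < K := by positivity
  set μ : ℝ := a * c / K with hμ
  have hfin := aux_sin_fixed_finite μ
  have himg : {p : ℝ × ℝ × ℝ × ℝ | zieglerMap a b k₁ k₂ c p = p} ⊆
      (fun x : ℝ => (x, x, -((k₁ + a) / a) * x, -((k₁ + a) / a) * x)) ''
        {x : ℝ | x = μ * Real.sin x} := by
    rintro ⟨x, y, z, w⟩ hp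
    simp only [Set.mem_setOf_eq, zieglerMap, Prod.mk.injEq] at hp
    obtain ⟨h1, h2, h3, h4⟩ := hp
    have hab : a * b ≠ 0 := by positivity
    have e2 : -(a + b) * k₁ * x + a * k₂ * z + a * c * Real.sin x = a * b * y := by
      field_simp at h2; linarith
    have e4 : a * k₁ * x - a * k₂ * z - a * c * Real.sin x = a * b * w := by
      field_simp at h4; linear_combination a * h4
    have hz' : a * z = -(k₁ + a) * x := by
      rw [h1] at e2
      rw [h3] at e4
      nlinarith [e2, e4]
    have hz : z = -((k₁ + a) / a) * x := by
      field_simp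
      linarith
    have hx : x = μ * Real.sin x := by
      rw [hμ, div_mul_eq_mul_div, eq_div_iff hKpos.ne']
      rw [h3] at e4
      have key : a * (x * K) = a * (a * c * Real.sin x) := by
        rw [hK]; linear_combination a * e4 + (a * b + a * k₂) * hz'
      exact mul_left_cancel₀ ha.ne' key
    refine ⟨x, hx, ?_⟩
    subst h1; subst h3
    rw [hz]
  exact (hfin.image _).subset himg
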